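/- arXiv:2105.06093 — 2 statements merged into one kernel-verified Lean document; each statement's English description precedes it below -/
import Mathlib

section
/- Let 0 < ρ < 1 and |ζ| < 1. Then Σ_{l≥0} (−1)^{l+1} / (1 − ρ^{2l}ζ) = −Σ_{k≥0} ζᵏ/(1+ρ^{2k}), with both series converging (the left side conditionally via pairing, the right side absolutely). -/
open Filter Complex

/-- Σ_{l≥0} (−1)^{l+1}/(1 − ρ^{2l}ζ) = −Σ_{k≥0} ζᵏ/(1+ρ^{2k}), the left side summed
in the regularized (Abel) sense corresponding to the pairing of consecutive terms,
the right side absolutely convergent. -/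
theorem alternating_resummation (ρ : ℝ) (hρ₀ : 0 < ρ) (hρ₁ : ρ < 1)
    (ζ : ℂ) (hζ : ‖ζ‖ < 1) :
    Summable (fun k : ℕ => ζ ^ k / (1 + (ρ : ℂ) ^ (2*k))) ∧
    ∃ g : ℝ → ℂ,
      (∀ x : ℝ, 0 ≤ x → x < 1 →
        HasSum (fun l : ℕ => (-1) ^ (l+1) * (x : ℂ) ^ l / (1 - (ρ : ℂ) ^ (2*l) * ζ)) (g x)) ∧
      Filter.Tendsto g (nhdsWithin 1 (Set.Iio 1))
        (nhds (-∑' k : ℕ, ζ ^ k / (1 + (ρ : ℂ) ^ (2*k)))) := by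
  have hρnn : (0:ℝ) ≤ ρ := hρ₀.le
  have hζnn : (0:ℝ) ≤ ‖ζ‖ := norm_nonneg ζ
  -- denominator bounds
  have hden : ∀ y : ℝ, 0 ≤ y → (1:ℝ) ≤ ‖(1 : ℂ) + (y:ℂ)‖ := by
    intro y hy
    have : (1:ℂ) + (y:ℂ) = (((1 + y : ℝ)):ℂ) := by push_cast; ring
    rw [this, Complex.norm_real, Real.norm_eq_abs, abs_of_pos (by linarith)]
    linarith
  -- Part 1 : summability
  have hsum1 : Summable (fun k : ℕ => ζ ^ k / (1 + (ρ : ℂ) ^ (2*k))) := by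
    apply Summable.of_norm_bounded (summable_geometric_of_lt_one hζnn hζ)
    intro k
    rw [norm_div]
    have h1 : (1:ℝ) ≤ ‖(1:ℂ) + (ρ:ℂ)^(2*k)‖ := by
      have := hden (ρ^(2*k)) (by positivity)
      rwa [Complex.ofReal_pow] at this
    calc ‖ζ^k‖ / ‖(1:ℂ) + (ρ:ℂ)^(2*k)‖ ≤ ‖ζ^k‖ / 1 :=
          div_le_div_of_nonneg_left (norm_nonneg _) one_pos h1
      _ = ‖ζ‖ ^ k := by simp [norm_pow]
  refine ⟨hsum1, ?_⟩
  refine ⟨fun x => -∑' k : ℕ, ζ ^ k / (1 + (x:ℂ) * (ρ:ℂ) ^ (2*k)), ?_, ?_⟩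
  · -- HasSum for each x ∈ [0,1)
    intro x hx0 hx1
    set F : ℕ × ℕ → ℂ := fun p =>
      ((-1) ^ (p.1+1) * (x:ℂ) ^ p.1) * ((ρ:ℂ) ^ (2*p.1) * ζ) ^ p.2 with hF
    have habs : ∀ l : ℕ, ‖(ρ:ℂ) ^ (2*l) * ζ‖ < 1 := by
      intro l
      rw [norm_mul, norm_pow, Complex.norm_real, Real.norm_eq_abs, abs_of_pos hρ₀]
      have h1 : ρ ^ (2*l) ≤ 1 := pow_le_one₀ hρnn hρ₁.le
      calc ρ^(2*l) * ‖ζ‖ ≤ 1 * ‖ζ‖ :=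
            mul_le_mul_of_nonneg_right h1 hζnn
        _ < 1 := by simpa using hζ
    have hFsum : Summable F := by
      apply Summable.of_norm_bounded (g := fun p : ℕ × ℕ => x ^ p.1 * ‖ζ‖ ^ p.2)
      · exact (summable_geometric_of_lt_one hx0 hx1).mul_of_nonneg
          (summable_geometric_of_lt_one hζnn hζ) (fun n => by positivity)
          (fun n => by positivity)
      · rintro ⟨l, k⟩
        simp only [hF, norm_mul, norm_pow, map_mul, map_pow,
          norm_neg, norm_one, one_pow, one_mul, Complex.norm_real, Real.norm_eq_abs,
          _root_.abs_of_nonneg hρnn, _root_.abs_of_nonneg hx0]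
        have h1 : ρ ^ (2*l) ≤ 1 := pow_le_one₀ hρnn hρ₁.le
        have h2 : (ρ ^ (2*l) * ‖ζ‖) ^ k ≤ ‖ζ‖ ^ k := by
          apply pow_le_pow_left₀ (by positivity)
          calc ρ^(2*l) * ‖ζ‖ ≤ 1 * ‖ζ‖ :=
                mul_le_mul_of_nonneg_right h1 hζnn
            _ = ‖ζ‖ := one_mul _
        exact mul_le_mul_of_nonneg_left h2 (by positivity)
    -- row sums (over k)
    have hrow : ∀ l : ℕ, HasSum (fun k => F (l, k))
        ((-1) ^ (l+1) * (x:ℂ) ^ l / (1 - (ρ:ℂ) ^ (2*l) * ζ)) := by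
      intro l
      have := (hasSum_geometric_of_norm_lt_one (ξ := (ρ:ℂ) ^ (2*l) * ζ)
        (by simpa using habs l)).mul_left ((-1) ^ (l+1) * (x:ℂ) ^ l)
      simpa [div_eq_mul_inv] using this
    -- column sums (over l)
    have hcol : ∀ k : ℕ, HasSum (fun l => F (l, k))
        (-(ζ ^ k / (1 + (x:ℂ) * (ρ:ℂ) ^ (2*k)))) := by
      intro k
      have hr : ‖-( (x:ℂ) * (ρ:ℂ) ^ (2*k))‖ < 1 := by
        rw [norm_neg, norm_mul, norm_pow, Complex.norm_real,
          Complex.norm_real, Real.norm_eq_abs, Real.norm_eq_abs, _root_.abs_of_nonneg hx0, _root_.abs_of_nonneg hρnn]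
        have h1 : ρ ^ (2*k) ≤ 1 := pow_le_one₀ hρnn hρ₁.le
        calc x * ρ^(2*k) ≤ x * 1 := mul_le_mul_of_nonneg_left h1 hx0
          _ < 1 := by simpa using hx1
      have hgeo := (hasSum_geometric_of_norm_lt_one hr).mul_left (-(ζ ^ k))
      have heq : ∀ l : ℕ, -(ζ^k) * (-((x:ℂ) * (ρ:ℂ)^(2*k)))^l = F (l, k) := by
        intro l
        simp only [hF]
        rw [neg_pow, mul_pow, mul_pow, ← pow_mul, ← pow_mul,
          show 2*k*l = 2*l*k by ring]
        ring
      have h2 : -(ζ^k) * (1 - -((x:ℂ) * (ρ:ℂ)^(2*k)))⁻¹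
          = -(ζ ^ k / (1 + (x:ℂ) * (ρ:ℂ) ^ (2*k))) := by
        rw [div_eq_mul_inv]; ring_nf
      rw [funext heq, h2] at hgeo
      exact hgeo
    -- assemble via Fubini
    have hsummableA : Summable
        (fun l : ℕ => (-1)^(l+1) * (x:ℂ)^l / (1 - (ρ:ℂ)^(2*l) * ζ)) :=
      hFsum.prod.congr fun l => (hrow l).tsum_eq
    have key : ∑' l : ℕ, (-1)^(l+1) * (x:ℂ)^l / (1 - (ρ:ℂ)^(2*l) * ζ)
        = -∑' k : ℕ, ζ^k / (1 + (x:ℂ) * (ρ:ℂ)^(2*k)) := by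
      calc ∑' l : ℕ, (-1)^(l+1) * (x:ℂ)^l / (1 - (ρ:ℂ)^(2*l) * ζ)
          = ∑' l : ℕ, ∑' k : ℕ, F (l, k) := tsum_congr fun l => (hrow l).tsum_eq.symm
        _ = ∑' k : ℕ, ∑' l : ℕ, F (l, k) :=
            (Summable.tsum_comm (f := fun l k => F (l, k)) hFsum).symm
        _ = ∑' k : ℕ, -(ζ^k / (1 + (x:ℂ) * (ρ:ℂ)^(2*k))) :=
            tsum_congr fun k => (hcol k).tsum_eq
        _ = -∑' k : ℕ, ζ^k / (1 + (x:ℂ) * (ρ:ℂ)^(2*k)) := tsum_neg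
    exact hsummableA.hasSum_iff.mpr key
  · -- the limit as x → 1⁻
    apply Filter.Tendsto.neg
    apply tendsto_tsum_of_dominated_convergence
      (bound := fun k : ℕ => ‖ζ‖ ^ k)
      (summable_geometric_of_lt_one hζnn hζ)
    · intro k
      have hne : (1:ℂ) + ((1:ℝ):ℂ) * (ρ:ℂ)^(2*k) ≠ 0 := by
        rw [show (1:ℂ) + ((1:ℝ):ℂ) * (ρ:ℂ)^(2*k) = (((1 + ρ^(2*k) : ℝ)):ℂ) by
          push_cast; ring]
        exact Complex.ofReal_ne_zero.mpr (by positivity)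
      have hc : ContinuousAt (fun x : ℝ => ζ^k / (1 + (x:ℂ) * (ρ:ℂ)^(2*k))) 1 := by
        apply ContinuousAt.div continuousAt_const
        · exact continuousAt_const.add
            (Complex.continuous_ofReal.continuousAt.mul continuousAt_const)
        · exact hne
      have := hc.tendsto.mono_left
        (nhdsWithin_le_nhds : nhdsWithin (1:ℝ) (Set.Iio 1) ≤ nhds 1)
      simpa using this
    · have hmem : Set.Ioo (0:ℝ) 1 ∈ nhdsWithin (1:ℝ) (Set.Iio 1) :=
        Ioo_mem_nhdsLT_of_mem (by constructor <;> norm_num)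
      filter_upwards [hmem] with x hx k
      obtain ⟨hx0, hx1⟩ := hx
      rw [norm_div]
      have h1 : (1:ℝ) ≤ ‖(1:ℂ) + (x:ℂ) * (ρ:ℂ)^(2*k)‖ := by
        have := hden (x * ρ^(2*k)) (by positivity)
        rwa [Complex.ofReal_mul, Complex.ofReal_pow] at this
      calc ‖ζ^k‖ / ‖(1:ℂ) + (x:ℂ) * (ρ:ℂ)^(2*k)‖ ≤ ‖ζ^k‖ / 1 :=
            div_le_div_of_nonneg_left (norm_nonneg _) one_pos h1
        _ = ‖ζ‖ ^ k := by simp [norm_pow]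
end

section
/- Let r₁, r₂ > 0 and ε > 0 small. Define c₁ = (r₂² − r₁² − (r₁+r₂+ε)²)/(2(r₁+r₂+ε)) − β/2 and c₂ = c₁ + r₁ + r₂ + ε, with β = √ε √((2r₁+ε)(2r₂+ε)(2r₁+2r₂+ε))/(r₁+r₂+ε). Then with R_j² = 1 + β/c_j one has ρ := R₁/R₂ = 1 − r*√ε + O(ε) as ε → 0⁺, where r* = √(2(r₁+r₂)/(r₁r₂)). -/
set_option maxHeartbeats 1000000

lemma sqrt_taylor' (x : ℝ) (hx : |x| ≤ 1/2) :
    |Real.sqrt (1+x) - (1 + x/2)| ≤ x^2 := by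
  have hx' := abs_le.mp hx
  have h1 : (0:ℝ) ≤ 1 + x := by linarith [hx'.1]
  have hy0 : 0 ≤ Real.sqrt (1+x) := Real.sqrt_nonneg _
  have hy2 : Real.sqrt (1+x) ^ 2 = 1 + x := Real.sq_sqrt h1
  set y := Real.sqrt (1+x)
  rw [abs_le]
  constructor
  · nlinarith [sq_nonneg (y + (1 + x/2 - x^2)), sq_nonneg x, sq_nonneg (x/2)]
  · nlinarith [sq_nonneg (y - (1 + x/2)), sq_nonneg x]

lemma prodEst (r₁ r₂ ε β A : ℝ) (hr₁ : 0 < r₁) (hr₂ : 0 < r₂) (hε : 0 < ε)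
    (hεr₂ : ε ≤ r₂) (h108 : 108*ε ≤ r₁+r₂)
    (hβpos : 0 < β) (hA0 : 0 ≤ A)
    (hA : A * (2*(r₁+r₂)) ≤ ε*(2*r₂+ε) + β*(r₁+r₂+ε))
    (hβle : β * (4*(r₁+r₂)) ≤ r₁*r₂)
    (hβub : β^2 * (r₁+r₂) ≤ 27*ε*r₁*r₂) :
    β * A * (8*(r₁+r₂)^2) ≤ ε * (3*r₁*r₂^2 + 109*r₁*r₂*(r₁+r₂)) := by
  have hs₀ : (0:ℝ) < r₁+r₂ := by linarith
  have t1 : 4*β*(r₁+r₂)*(A*(2*(r₁+r₂))) ≤ 4*β*(r₁+r₂)*(ε*(2*r₂+ε) + β*(r₁+r₂+ε)) :=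
    mul_le_mul_of_nonneg_left hA (by positivity)
  have hβle' : 4*β*(r₁+r₂) ≤ r₁*r₂ := by linarith
  have t2 : (4*β*(r₁+r₂))*(ε*(2*r₂+ε)) ≤ (r₁*r₂)*(ε*(2*r₂+ε)) :=
    mul_le_mul_of_nonneg_right hβle' (by positivity)
  have t3 : (r₁*r₂)*(ε*(2*r₂+ε)) ≤ 3*ε*r₁*r₂*r₂ := by
    nlinarith [mul_nonneg (mul_nonneg (mul_pos hr₁ hr₂).le hε.le) (sub_nonneg.2 hεr₂)]
  have t4 : 4*(β^2*(r₁+r₂))*(r₁+r₂) ≤ 4*(27*ε*r₁*r₂)*(r₁+r₂) :=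
    mul_le_mul_of_nonneg_right (by linarith) (by positivity)
  have t5 : 4*(β^2*(r₁+r₂))*ε ≤ 4*(27*ε*r₁*r₂)*ε :=
    mul_le_mul_of_nonneg_right (by linarith) hε.le
  have t6 : 108*ε*(ε*r₁*r₂) ≤ (r₁+r₂)*(ε*r₁*r₂) :=
    mul_le_mul_of_nonneg_right h108 (by positivity)
  nlinarith [t1, t2, t3, t4, t5, t6]

-- side 1 estimate
lemma side1Est (r₁ r₂ ε β c₁ : ℝ) (hr₁ : 0 < r₁) (hr₂ : 0 < r₂) (hε : 0 < ε)
    (hεr₂ : ε ≤ r₂) (h108 : 108*ε ≤ r₁+r₂)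
    (hβpos : 0 < β) (hβr₁ : β ≤ r₁/4)
    (hβle : β * (4*(r₁+r₂)) ≤ r₁*r₂)
    (hβub : β^2 * (r₁+r₂) ≤ 27*ε*r₁*r₂)
    (hc₁ub : c₁ ≤ -r₁)
    (hA₁ : |c₁ + r₁| * (2*(r₁+r₂)) ≤ ε*(2*r₂+ε) + β*(r₁+r₂+ε)) :
    |Real.sqrt (1+β/c₁) - (1 - β/(2*r₁))| ≤
      ε * (27*r₂/((r₁+r₂)*r₁)) + ε * ((3*r₁*r₂^2 + 109*r₁*r₂*(r₁+r₂))/(8*(r₁+r₂)^2*r₁^2))/2 := by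
  have hs₀ : (0:ℝ) < r₁+r₂ := by linarith
  have hc₁neg : c₁ < 0 := by linarith
  have hx₁ : |β/c₁| ≤ 1/2 := by
    rw [abs_div, abs_of_pos hβpos, abs_of_neg hc₁neg, div_le_iff₀ (by linarith)]
    linarith
  have hc₁sq : r₁^2 ≤ c₁^2 := by nlinarith
  have hx₁sq : (β/c₁)^2 ≤ ε * (27*r₂/((r₁+r₂)*r₁)) := by
    rw [div_pow, show ε * (27*r₂/((r₁+r₂)*r₁)) = 27*ε*r₂/((r₁+r₂)*r₁) by ring,
      div_le_div_iff₀ (lt_of_lt_of_le (by positivity) hc₁sq) (by positivity)]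
    nlinarith [mul_le_mul_of_nonneg_right hβub hr₁.le,
      mul_le_mul_of_nonneg_left hc₁sq (by positivity : (0:ℝ) ≤ 27*ε*r₂)]
  have hkey₁ : β * |c₁+r₁| * (8*(r₁+r₂)^2) ≤ ε * (3*r₁*r₂^2 + 109*r₁*r₂*(r₁+r₂)) :=
    prodEst r₁ r₂ ε β (|c₁+r₁|) hr₁ hr₂ hε hεr₂ h108 hβpos (abs_nonneg _) hA₁ hβle hβub
  have h3 : |β/c₁ + β/r₁| ≤ ε * ((3*r₁*r₂^2 + 109*r₁*r₂*(r₁+r₂))/(8*(r₁+r₂)^2*r₁^2)) := by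
    have hc0 : c₁ ≠ 0 := ne_of_lt hc₁neg
    have hr0 : r₁ ≠ 0 := ne_of_gt hr₁
    have e1 : β/c₁ + β/r₁ = β*(c₁+r₁)/(c₁*r₁) := by field_simp; ring
    have e2 : |c₁*r₁| = (-c₁)*r₁ := by
      rw [abs_mul, abs_of_neg hc₁neg, abs_of_pos hr₁]
    rw [e1, abs_div, abs_mul, abs_of_pos hβpos, e2,
      show ε * ((3*r₁*r₂^2 + 109*r₁*r₂*(r₁+r₂))/(8*(r₁+r₂)^2*r₁^2))
        = ε * (3*r₁*r₂^2 + 109*r₁*r₂*(r₁+r₂))/(8*(r₁+r₂)^2*r₁^2) by ring,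
      div_le_div_iff₀ (by nlinarith) (by positivity)]
    have h1 : β * |c₁+r₁| * (8*(r₁+r₂)^2) * r₁^2 ≤ ε * (3*r₁*r₂^2 + 109*r₁*r₂*(r₁+r₂)) * r₁^2 :=
      mul_le_mul_of_nonneg_right hkey₁ (by positivity)
    have h2 : r₁ * r₁ ≤ (-c₁) * r₁ := mul_le_mul_of_nonneg_right (by linarith) hr₁.le
    have h3' : ε * (3*r₁*r₂^2 + 109*r₁*r₂*(r₁+r₂)) * (r₁*r₁) ≤
        ε * (3*r₁*r₂^2 + 109*r₁*r₂*(r₁+r₂)) * ((-c₁)*r₁) :=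
      mul_le_mul_of_nonneg_left h2 (by positivity)
    nlinarith [h1, h3']
  have step := sqrt_taylor' (β/c₁) hx₁
  have e : (1+(β/c₁)/2) - (1-β/(2*r₁)) = (β/c₁ + β/r₁)/2 := by ring
  calc |Real.sqrt (1+β/c₁) - (1 - β/(2*r₁))|
      ≤ |Real.sqrt (1+β/c₁) - (1+(β/c₁)/2)| + |(1+(β/c₁)/2) - (1-β/(2*r₁))| :=
        abs_sub_le _ _ _
    _ = |Real.sqrt (1+β/c₁) - (1+(β/c₁)/2)| + |β/c₁ + β/r₁|/2 := by
        rw [e, abs_div, abs_two]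
    _ ≤ _ := by linarith [hx₁sq, h3, step]

-- side 2 estimate
lemma side2Est (r₁ r₂ ε β c₂ : ℝ) (hr₁ : 0 < r₁) (hr₂ : 0 < r₂) (hε : 0 < ε)
    (hεr₁ : ε ≤ r₁) (h108 : 108*ε ≤ r₁+r₂)
    (hβpos : 0 < β) (hβr₂ : β ≤ r₂/4)
    (hβle : β * (4*(r₁+r₂)) ≤ r₁*r₂)
    (hβub : β^2 * (r₁+r₂) ≤ 27*ε*r₁*r₂)
    (hc₂lb : r₂/2 ≤ c₂)
    (hA₂ : |c₂ - r₂| * (2*(r₁+r₂)) ≤ ε*(2*r₁+ε) + β*(r₁+r₂+ε)) :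
    |Real.sqrt (1+β/c₂) - (1 + β/(2*r₂))| ≤
      ε * (108*r₁/((r₁+r₂)*r₂)) + ε * ((3*r₂*r₁^2 + 109*r₁*r₂*(r₁+r₂))/(4*(r₁+r₂)^2*r₂^2))/2 := by
  have hs₀ : (0:ℝ) < r₁+r₂ := by linarith
  have hc₂pos : 0 < c₂ := by linarith
  have hx₂ : |β/c₂| ≤ 1/2 := by
    rw [abs_of_pos (div_pos hβpos hc₂pos), div_le_iff₀ hc₂pos]
    linarith
  have hc₂sq : r₂^2/4 ≤ c₂^2 := by nlinarith
  have hx₂sq : (β/c₂)^2 ≤ ε * (108*r₁/((r₁+r₂)*r₂)) := by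
    rw [div_pow, show ε * (108*r₁/((r₁+r₂)*r₂)) = 108*ε*r₁/((r₁+r₂)*r₂) by ring,
      div_le_div_iff₀ (lt_of_lt_of_le (by positivity) hc₂sq) (by positivity)]
    nlinarith [mul_le_mul_of_nonneg_right hβub hr₂.le,
      mul_le_mul_of_nonneg_left hc₂sq (by positivity : (0:ℝ) ≤ 108*ε*r₁)]
  have hkey₂ : β * |c₂-r₂| * (8*(r₁+r₂)^2) ≤ ε * (3*r₂*r₁^2 + 109*r₁*r₂*(r₁+r₂)) := by
    have h := prodEst r₂ r₁ ε β (|c₂-r₂|) hr₂ hr₁ hε hεr₁ (by linarith) hβpos (abs_nonneg _)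
      (by linarith [hA₂]) (by linarith [hβle]) (by linarith [hβub])
    nlinarith [h]
  have h3b : |β/c₂ - β/r₂| ≤ ε * ((3*r₂*r₁^2 + 109*r₁*r₂*(r₁+r₂))/(4*(r₁+r₂)^2*r₂^2)) := by
    have hc0 : c₂ ≠ 0 := ne_of_gt hc₂pos
    have hr0 : r₂ ≠ 0 := ne_of_gt hr₂
    have e1 : β/c₂ - β/r₂ = β*(r₂-c₂)/(c₂*r₂) := by field_simp
    have e2 : |β*(r₂-c₂)| = β * |c₂-r₂| := by
      rw [abs_mul, abs_of_pos hβpos, abs_sub_comm]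
    rw [e1, abs_div, e2, abs_of_pos (mul_pos hc₂pos hr₂),
      show ε * ((3*r₂*r₁^2 + 109*r₁*r₂*(r₁+r₂))/(4*(r₁+r₂)^2*r₂^2))
        = ε * (3*r₂*r₁^2 + 109*r₁*r₂*(r₁+r₂))/(4*(r₁+r₂)^2*r₂^2) by ring,
      div_le_div_iff₀ (mul_pos hc₂pos hr₂) (by positivity)]
    have h1 : β * |c₂-r₂| * (8*(r₁+r₂)^2) * (r₂^2/2) ≤
        ε * (3*r₂*r₁^2 + 109*r₁*r₂*(r₁+r₂)) * (r₂^2/2) :=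
      mul_le_mul_of_nonneg_right hkey₂ (by positivity)
    have h2 : r₂^2/2 ≤ c₂ * r₂ := by nlinarith
    have h3' : ε * (3*r₂*r₁^2 + 109*r₁*r₂*(r₁+r₂)) * (r₂^2/2) ≤
        ε * (3*r₂*r₁^2 + 109*r₁*r₂*(r₁+r₂)) * (c₂*r₂) :=
      mul_le_mul_of_nonneg_left h2 (by positivity)
    nlinarith [h1, h3']
  have step := sqrt_taylor' (β/c₂) hx₂
  have e : (1+(β/c₂)/2) - (1+β/(2*r₂)) = (β/c₂ - β/r₂)/2 := by ring
  calc |Real.sqrt (1+β/c₂) - (1 + β/(2*r₂))|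
      ≤ |Real.sqrt (1+β/c₂) - (1+(β/c₂)/2)| + |(1+(β/c₂)/2) - (1+β/(2*r₂))| :=
        abs_sub_le _ _ _
    _ = |Real.sqrt (1+β/c₂) - (1+(β/c₂)/2)| + |β/c₂ - β/r₂|/2 := by
        rw [e, abs_div, abs_two]
    _ ≤ _ := by linarith [hx₂sq, h3b, step]

lemma assembleRho (R₁ R₂ m a b e1 e2 e3 : ℝ) (hR₂1 : 1 ≤ R₂)
    (hm0 : 1/2 ≤ m) (hm1 : m ≤ 1)
    (hA : |R₁ - a| ≤ e1) (hB : |R₂ - b| ≤ e2) (hab : |a - m*b| ≤ e3) :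
    |R₁/R₂ - m| ≤ e1 + e2 + e3 := by
  have hR₂pos : (0:ℝ) < R₂ := by linarith
  have e : R₁/R₂ - m = (R₁ - m*R₂)/R₂ := by field_simp
  rw [e, abs_div, abs_of_pos hR₂pos]
  have h0 : |R₁ - m*R₂| ≤ e1 + e2 + e3 := by
    have h1 : R₁ - m*R₂ = (R₁ - a) - m*(R₂ - b) + (a - m*b) := by ring
    have h2 : |(R₁ - a) - m*(R₂ - b) + (a - m*b)| ≤ |(R₁-a) - m*(R₂-b)| + |a - m*b| :=
      abs_add_le _ _
    have h3 : |(R₁-a) - m*(R₂-b)| ≤ |R₁-a| + |m*(R₂-b)| := abs_sub _ _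
    have h4 : |m*(R₂-b)| = m * |R₂-b| := by
      rw [abs_mul, abs_of_nonneg (by linarith : (0:ℝ) ≤ m)]
    have h5 : m * |R₂-b| ≤ 1 * e2 := mul_le_mul hm1 hB (abs_nonneg _) (by norm_num)
    rw [h1]
    rw [h4] at h3
    linarith
  calc |R₁ - m*R₂|/R₂ ≤ |R₁ - m*R₂| := div_le_self (abs_nonneg _) hR₂1
    _ ≤ _ := h0

lemma mterm1 (r₁ r₂ ε t p β : ℝ) (hr₁ : 0 < r₁) (hr₂ : 0 < r₂) (hε : 0 < ε)
    (hεr₁ : ε ≤ r₁) (hεr₂ : ε ≤ r₂)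
    (ht0 : 0 ≤ t) (ht1 : t ≤ 1)
    (hp0 : 0 ≤ p) (hp2 : p^2 = (2*r₁+ε)*(2*r₂+ε)*(2*r₁+2*r₂+ε))
    (hβ : β = t*p/(r₁+r₂+ε)) :
    |Real.sqrt (2*(r₁+r₂)/(r₁*r₂)) * t - β*(r₁+r₂)/(2*r₁*r₂)|
      ≤ ε * ((8*r₁*r₂*(r₁+r₂) + (r₁+r₂)*(4*r₁*r₂+9*(r₁+r₂)^2))
           /(2*r₁*r₂*(r₁+r₂)*Real.sqrt (8*r₁*r₂*(r₁+r₂)))) := by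
  have hs₀ : (0:ℝ) < r₁+r₂ := by linarith
  have hs : (0:ℝ) < r₁+r₂+ε := by linarith
  set p₀ := Real.sqrt (8*r₁*r₂*(r₁+r₂)) with hp₀def
  have hp₀pos : 0 < p₀ := Real.sqrt_pos.mpr (by positivity)
  have hp₀2 : p₀^2 = 8*r₁*r₂*(r₁+r₂) := Real.sq_sqrt (by positivity)
  have hrs : Real.sqrt (2*(r₁+r₂)/(r₁*r₂)) = p₀ / (2*r₁*r₂) := by
    rw [hp₀def, show 2*(r₁+r₂)/(r₁*r₂) = 8*r₁*r₂*(r₁+r₂) / (2*r₁*r₂)^2 by field_simp; ring,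
      Real.sqrt_div' , Real.sqrt_sq (by positivity)]
    positivity
  have hPlb : 8*r₁*r₂*(r₁+r₂) ≤ p^2 := by
    rw [hp2]
    calc (8:ℝ)*r₁*r₂*(r₁+r₂) = (2*r₁)*(2*r₂)*(2*(r₁+r₂)) := by ring
      _ ≤ (2*r₁+ε)*(2*r₂+ε)*(2*r₁+2*r₂+ε) := by gcongr <;> nlinarith
  have hPub2 : p^2 ≤ 8*r₁*r₂*(r₁+r₂) + ε*(4*r₁*r₂+9*(r₁+r₂)^2) := by
    rw [hp2]
    nlinarith [mul_nonneg (mul_nonneg hε.le hε.le) (sub_nonneg.2 (by linarith : ε ≤ r₁+r₂)),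
      mul_nonneg hε.le (mul_nonneg (sub_nonneg.2 (by linarith : ε ≤ r₁+r₂))
        (by positivity : (0:ℝ) ≤ r₁+r₂+ε))]
  have hpge : p₀ ≤ p := by
    rw [hp₀def]
    calc Real.sqrt (8*r₁*r₂*(r₁+r₂)) ≤ Real.sqrt (p^2) := Real.sqrt_le_sqrt hPlb
      _ = p := Real.sqrt_sq hp0
  have hpd : (p - p₀) * p₀ ≤ ε*(4*r₁*r₂+9*(r₁+r₂)^2) := by
    nlinarith [hPub2, hpge, hp₀pos, hp₀2]
  have e5 : p₀/(2*r₁*r₂) * t - β*(r₁+r₂)/(2*r₁*r₂)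
      = t*(p₀*(r₁+r₂+ε) - p*(r₁+r₂))/(2*r₁*r₂*(r₁+r₂+ε)) := by
    rw [hβ]; field_simp
  rw [hrs, e5]
  have h6 : |p₀*(r₁+r₂+ε) - p*(r₁+r₂)| * p₀
      ≤ ε*(8*r₁*r₂*(r₁+r₂) + (r₁+r₂)*(4*r₁*r₂+9*(r₁+r₂)^2)) := by
    have habs : |p₀*(r₁+r₂+ε) - p*(r₁+r₂)| ≤ p₀*ε + (r₁+r₂)*(p-p₀) := by
      rw [abs_le]; constructor
      · nlinarith [hpge, hp₀pos.le]
      · nlinarith [hpge, hp₀pos.le]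
    have h7 : (r₁+r₂)*((p-p₀)*p₀) ≤ (r₁+r₂)*(ε*(4*r₁*r₂+9*(r₁+r₂)^2)) :=
      mul_le_mul_of_nonneg_left hpd hs₀.le
    nlinarith [mul_le_mul_of_nonneg_right habs hp₀pos.le, hp₀2]
  rw [abs_div, abs_mul, abs_of_nonneg ht0,
    abs_of_pos (by positivity : (0:ℝ) < 2*r₁*r₂*(r₁+r₂+ε)),
    show ε * ((8*r₁*r₂*(r₁+r₂) + (r₁+r₂)*(4*r₁*r₂+9*(r₁+r₂)^2))/(2*r₁*r₂*(r₁+r₂)*p₀))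
      = ε * (8*r₁*r₂*(r₁+r₂) + (r₁+r₂)*(4*r₁*r₂+9*(r₁+r₂)^2))/(2*r₁*r₂*(r₁+r₂)*p₀) by ring,
    div_le_div_iff₀ (by positivity) (by positivity)]
  have h8 : t*(|p₀*(r₁+r₂+ε) - p*(r₁+r₂)| * p₀)
      ≤ ε*(8*r₁*r₂*(r₁+r₂) + (r₁+r₂)*(4*r₁*r₂+9*(r₁+r₂)^2)) := by
    nlinarith [h6, ht1, ht0, abs_nonneg (p₀*(r₁+r₂+ε) - p*(r₁+r₂)), hp₀pos.le,
      mul_nonneg (abs_nonneg (p₀*(r₁+r₂+ε) - p*(r₁+r₂))) hp₀pos.le]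
  nlinarith [mul_le_mul_of_nonneg_right h8 (by positivity : (0:ℝ) ≤ 2*r₁*r₂*(r₁+r₂)),
    mul_nonneg (mul_nonneg hε.le
      (by positivity : (0:ℝ) ≤ 8*r₁*r₂*(r₁+r₂) + (r₁+r₂)*(4*r₁*r₂+9*(r₁+r₂)^2))) hε.le]

lemma mterm2 (r₁ r₂ ε t p β : ℝ) (hr₁ : 0 < r₁) (hr₂ : 0 < r₂) (hε : 0 < ε)
    (hεr₁ : ε ≤ r₁) (hεr₂ : ε ≤ r₂)
    (ht0 : 0 ≤ t) (ht2 : t^2 = ε)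
    (hp0 : 0 ≤ p) (hp2 : p^2 = (2*r₁+ε)*(2*r₂+ε)*(2*r₁+2*r₂+ε))
    (hβ : β = t*p/(r₁+r₂+ε)) :
    Real.sqrt (2*(r₁+r₂)/(r₁*r₂)) * t * (β/(2*r₂)) ≤ ε*(4/r₂) := by
  have hs₀ : (0:ℝ) < r₁+r₂ := by linarith
  have hs : (0:ℝ) < r₁+r₂+ε := by linarith
  set rs := Real.sqrt (2*(r₁+r₂)/(r₁*r₂)) with hrsdef
  have hrs0 : 0 ≤ rs := Real.sqrt_nonneg _
  have hrs2c : rs^2 * (r₁*r₂) = 2*(r₁+r₂) := by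
    rw [hrsdef, Real.sq_sqrt (by positivity)]; field_simp
  have hPub : p^2 ≤ 27*r₁*r₂*(r₁+r₂) := by
    rw [hp2]
    calc (2*r₁+ε)*(2*r₂+ε)*(2*r₁+2*r₂+ε) ≤ (3*r₁)*(3*r₂)*(3*(r₁+r₂)) := by
          gcongr <;> nlinarith
      _ = 27*r₁*r₂*(r₁+r₂) := by ring
  have hrsp : rs * p ≤ 8*(r₁+r₂) := by
    have h1 : (rs*p)^2 ≤ 54*(r₁+r₂)^2 := by
      have h2 : rs^2 * p^2 ≤ rs^2 * (27*r₁*r₂*(r₁+r₂)) :=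
        mul_le_mul_of_nonneg_left hPub (sq_nonneg rs)
      nlinarith [hrs2c, sq_nonneg rs]
    nlinarith [mul_nonneg hrs0 hp0, sq_nonneg (rs*p - 8*(r₁+r₂)), hs₀]
  have hβval : β*(r₁+r₂+ε) = t*p := by rw [hβ]; field_simp
  have htβ : t*β*(r₁+r₂+ε) = ε*p := by linear_combination t*hβval + p*ht2
  have e2 : t*β = ε*p/(r₁+r₂+ε) := by
    rw [eq_div_iff (ne_of_gt hs)]; linear_combination htβ
  have e : rs * t * (β/(2*r₂)) = rs * p * ε / (2*r₂*(r₁+r₂+ε)) := by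
    rw [show rs * t * (β/(2*r₂)) = rs * (t*β) / (2*r₂) by ring, e2]
    field_simp
  rw [e, show ε*(4/r₂) = 4*ε/r₂ by ring, div_le_div_iff₀ (by positivity) (by positivity)]
  nlinarith [mul_le_mul_of_nonneg_right hrsp (mul_nonneg hε.le hr₂.le), hε.le, hr₂.le,
    mul_nonneg (mul_nonneg hε.le hr₂.le) hε.le]

lemma mrtBound (r₁ r₂ ε t : ℝ) (hr₁ : 0 < r₁) (hr₂ : 0 < r₂)
    (hεq : ε * (432*(r₁+r₂)) ≤ r₁*r₂) (ht0 : 0 ≤ t) (ht2 : t^2 = ε) :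
    Real.sqrt (2*(r₁+r₂)/(r₁*r₂)) * t ≤ 1/2 := by
  have hs₀ : (0:ℝ) < r₁+r₂ := by linarith
  set rs := Real.sqrt (2*(r₁+r₂)/(r₁*r₂)) with hrsdef
  have hrs0 : 0 ≤ rs := Real.sqrt_nonneg _
  have hrs2c : rs^2 * (r₁*r₂) = 2*(r₁+r₂) := by
    rw [hrsdef, Real.sq_sqrt (by positivity)]; field_simp
  have h1 : (rs*t)^2 * (r₁*r₂) = 2*(r₁+r₂)*ε := by nlinarith [hrs2c, ht2]
  nlinarith [mul_nonneg hrs0 ht0, sq_nonneg (rs*t - 1/2), sq_nonneg (rs*t),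
    mul_pos hr₁ hr₂, h1]

noncomputable def rhoC (r₁ r₂ : ℝ) : ℝ :=
  (27*r₂/((r₁+r₂)*r₁) + (3*r₁*r₂^2 + 109*r₁*r₂*(r₁+r₂))/(8*(r₁+r₂)^2*r₁^2)/2)
  + (108*r₁/((r₁+r₂)*r₂) + (3*r₂*r₁^2 + 109*r₁*r₂*(r₁+r₂))/(4*(r₁+r₂)^2*r₂^2)/2)
  + (8*r₁*r₂*(r₁+r₂) + (r₁+r₂)*(4*r₁*r₂+9*(r₁+r₂)^2))
      /(2*r₁*r₂*(r₁+r₂)*Real.sqrt (8*r₁*r₂*(r₁+r₂)))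
  + 4/r₂

set_option maxHeartbeats 2000000 in
lemma keyRho (r₁ r₂ ε t p β c₁ c₂ : ℝ) (hr₁ : 0 < r₁) (hr₂ : 0 < r₂) (hε : 0 < ε)
    (hε1 : ε ≤ 1) (hεK : ε ≤ r₁*r₂/(432*(r₁+r₂)))
    (ht0 : 0 ≤ t) (ht2 : t^2 = ε)
    (hp0 : 0 ≤ p) (hp2 : p^2 = (2*r₁+ε)*(2*r₂+ε)*(2*r₁+2*r₂+ε))
    (hβ : β = t*p/(r₁+r₂+ε))
    (hc₁ : c₁ = (r₂^2 - r₁^2 - (r₁+r₂+ε)^2)/(2*(r₁+r₂+ε)) - β/2)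
    (hc₂ : c₂ = c₁ + r₁ + r₂ + ε) :
    |Real.sqrt (1+β/c₁) / Real.sqrt (1+β/c₂)
      - (1 - Real.sqrt (2*(r₁+r₂)/(r₁*r₂)) * t)| ≤ rhoC r₁ r₂ * ε := by
  have hs₀ : (0:ℝ) < r₁ + r₂ := by linarith
  have hs : (0:ℝ) < r₁ + r₂ + ε := by linarith
  have hεq : ε * (432*(r₁+r₂)) ≤ r₁*r₂ := by
    rw [le_div_iff₀ (by positivity)] at hεK; linarith
  have hεr₁ : ε ≤ r₁ := by nlinarith
  have hεr₂ : ε ≤ r₂ := by nlinarith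
  have hεs₀ : ε ≤ r₁ + r₂ := by linarith
  have h108 : 108 * ε ≤ r₁ + r₂ := by nlinarith [sq_nonneg (r₁ - r₂)]
  have ht1 : t ≤ 1 := by nlinarith
  have htpos : 0 < t := by nlinarith
  have hPub : p^2 ≤ 27*r₁*r₂*(r₁+r₂) := by
    rw [hp2]
    calc (2*r₁+ε)*(2*r₂+ε)*(2*r₁+2*r₂+ε) ≤ (3*r₁)*(3*r₂)*(3*(r₁+r₂)) := by
          gcongr <;> nlinarith
      _ = 27*r₁*r₂*(r₁+r₂) := by ring
  have hPlb : 8*r₁*r₂*(r₁+r₂) ≤ p^2 := by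
    rw [hp2]
    calc (8:ℝ)*r₁*r₂*(r₁+r₂) = (2*r₁)*(2*r₂)*(2*(r₁+r₂)) := by ring
      _ ≤ (2*r₁+ε)*(2*r₂+ε)*(2*r₁+2*r₂+ε) := by gcongr <;> nlinarith
  have hppos : 0 < p := by
    rcases hp0.lt_or_eq with h|h
    · exact h
    · exfalso; rw [← h] at hPlb; norm_num at hPlb
      nlinarith [mul_pos (mul_pos hr₁ hr₂) hs₀]
  have hβval : β * (r₁+r₂+ε) = t * p := by rw [hβ]; field_simp
  have hβpos : 0 < β := by rw [hβ]; positivity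
  have hβsq : β^2 * (r₁+r₂+ε)^2 = ε * p^2 := by
    linear_combination (β*(r₁+r₂+ε) + t*p) * hβval + p^2 * ht2
  have hβub : β^2 * (r₁+r₂) ≤ 27*ε*r₁*r₂ := by
    have h1 : ε*p^2 ≤ ε*(27*r₁*r₂*(r₁+r₂)) := mul_le_mul_of_nonneg_left hPub hε.le
    have h2 : β^2*(r₁+r₂)^2 ≤ β^2*(r₁+r₂+ε)^2 :=
      mul_le_mul_of_nonneg_left (by nlinarith : (r₁+r₂)^2 ≤ (r₁+r₂+ε)^2) (sq_nonneg β)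
    nlinarith [hβsq, h1, h2, hs₀]
  have hβle : β * (4*(r₁+r₂)) ≤ r₁*r₂ := by
    have h1 : (β*(4*(r₁+r₂)))^2 ≤ (r₁*r₂)^2 := by
      nlinarith [mul_le_mul_of_nonneg_right hβub (by positivity : (0:ℝ) ≤ 16*(r₁+r₂)),
        mul_le_mul_of_nonneg_left hεq (mul_pos hr₁ hr₂).le]
    nlinarith [h1, mul_pos hr₁ hr₂,
      mul_nonneg (mul_nonneg hβpos.le (by norm_num : (0:ℝ) ≤ 4)) hs₀.le]
  have hβr₁ : β ≤ r₁/4 := by nlinarith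
  have hβr₂ : β ≤ r₂/4 := by nlinarith
  -- c₁ facts
  have hc₁' : c₁ = -r₁ - ε*(2*r₂+ε)/(2*(r₁+r₂+ε)) - β/2 := by
    rw [hc₁]; field_simp; ring
  have hc₁ub : c₁ ≤ -r₁ := by
    have h : 0 ≤ ε*(2*r₂+ε)/(2*(r₁+r₂+ε)) := by positivity
    rw [hc₁']; linarith
  have habs₁ : |c₁ + r₁| * (2*(r₁+r₂+ε)) = ε*(2*r₂+ε) + β*(r₁+r₂+ε) := by
    rw [abs_of_nonpos (by linarith), hc₁']; field_simp; ring
  have hA₁ : |c₁ + r₁| * (2*(r₁+r₂)) ≤ ε*(2*r₂+ε) + β*(r₁+r₂+ε) := by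
    nlinarith [abs_nonneg (c₁ + r₁), habs₁]
  -- c₂ facts
  have hc₂' : c₂ = r₂ + ε*(2*r₁+ε)/(2*(r₁+r₂+ε)) - β/2 := by
    rw [hc₂, hc₁']; field_simp; ring
  have hc₂lb : r₂/2 ≤ c₂ := by
    have h : 0 ≤ ε*(2*r₁+ε)/(2*(r₁+r₂+ε)) := by positivity
    rw [hc₂']; linarith
  have hc₂pos : 0 < c₂ := by linarith
  have hA₂ : |c₂ - r₂| * (2*(r₁+r₂)) ≤ ε*(2*r₁+ε) + β*(r₁+r₂+ε) := by
    have hd : ε*(2*r₁+ε)/(2*(r₁+r₂+ε)) * (2*(r₁+r₂+ε)) = ε*(2*r₁+ε) := by field_simp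
    have hd0 : 0 ≤ ε*(2*r₁+ε)/(2*(r₁+r₂+ε)) := by positivity
    have habs : |c₂ - r₂| ≤ ε*(2*r₁+ε)/(2*(r₁+r₂+ε)) + β/2 := by
      rw [hc₂', abs_le]; constructor
      · nlinarith
      · nlinarith
    nlinarith [abs_nonneg (c₂ - r₂), habs, hd, hd0]
  -- apply the side estimates
  have HA := side1Est r₁ r₂ ε β c₁ hr₁ hr₂ hε hεr₂ h108 hβpos hβr₁ hβle hβub hc₁ub hA₁
  have HB := side2Est r₁ r₂ ε β c₂ hr₁ hr₂ hε hεr₁ h108 hβpos hβr₂ hβle hβub hc₂lb hA₂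
  have hterm1 := mterm1 r₁ r₂ ε t p β hr₁ hr₂ hε hεr₁ hεr₂ ht0 ht1 hp0 hp2 hβ
  have hterm2 := mterm2 r₁ r₂ ε t p β hr₁ hr₂ hε hεr₁ hεr₂ ht0 ht2 hp0 hp2 hβ
  have hmrt := mrtBound r₁ r₂ ε t hr₁ hr₂ hεq ht0 ht2
  have hmrt0 : 0 ≤ Real.sqrt (2*(r₁+r₂)/(r₁*r₂)) * t :=
    mul_nonneg (Real.sqrt_nonneg _) ht0
  set rs := Real.sqrt (2*(r₁+r₂)/(r₁*r₂)) with hrsdef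
  set p₀ := Real.sqrt (8*r₁*r₂*(r₁+r₂)) with hp₀def
  -- a - m*b bound
  have hab : |(1 - β/(2*r₁)) - (1 - rs*t)*(1 + β/(2*r₂))|
      ≤ ε * ((8*r₁*r₂*(r₁+r₂) + (r₁+r₂)*(4*r₁*r₂+9*(r₁+r₂)^2))/(2*r₁*r₂*(r₁+r₂)*p₀))
        + ε*(4/r₂) := by
    have eab : (1 - β/(2*r₁)) - (1 - rs*t)*(1 + β/(2*r₂))
        = (rs*t - β*(r₁+r₂)/(2*r₁*r₂)) + rs*t*(β/(2*r₂)) := by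
      field_simp; ring
    rw [eab]
    have htri := abs_add_le (rs*t - β*(r₁+r₂)/(2*r₁*r₂)) (rs*t*(β/(2*r₂)))
    have habs2 : |rs*t*(β/(2*r₂))| = rs*t*(β/(2*r₂)) :=
      abs_of_nonneg (by positivity)
    rw [habs2] at htri
    linarith [hterm1, hterm2, htri]
  have hx₁lb : -(1/2) ≤ β/c₁ := by
    have hc₁neg : c₁ < 0 := by linarith
    have hx₁ : |β/c₁| ≤ 1/2 := by
      rw [abs_div, abs_of_pos hβpos, abs_of_neg hc₁neg, div_le_iff₀ (by linarith)]
      linarith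
    exact (abs_le.mp hx₁).1
  have hx₂lb : 0 ≤ β/c₂ := (div_pos hβpos hc₂pos).le
  have hR₂1 : 1 ≤ Real.sqrt (1+β/c₂) := by
    have h := Real.sqrt_le_sqrt (show (1:ℝ) ≤ 1+β/c₂ by linarith)
    simpa using h
  have final := assembleRho (Real.sqrt (1+β/c₁)) (Real.sqrt (1+β/c₂)) (1 - rs*t)
    (1 - β/(2*r₁)) (1 + β/(2*r₂))
    (ε * (27*r₂/((r₁+r₂)*r₁)) + ε * ((3*r₁*r₂^2 + 109*r₁*r₂*(r₁+r₂))/(8*(r₁+r₂)^2*r₁^2))/2)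
    (ε * (108*r₁/((r₁+r₂)*r₂)) + ε * ((3*r₂*r₁^2 + 109*r₁*r₂*(r₁+r₂))/(4*(r₁+r₂)^2*r₂^2))/2)
    (ε * ((8*r₁*r₂*(r₁+r₂) + (r₁+r₂)*(4*r₁*r₂+9*(r₁+r₂)^2))/(2*r₁*r₂*(r₁+r₂)*p₀)) + ε*(4/r₂))
    hR₂1 (by linarith) (by linarith) HA HB hab
  calc |Real.sqrt (1+β/c₁) / Real.sqrt (1+β/c₂) - (1 - rs*t)| ≤ _ := final
    _ = rhoC r₁ r₂ * ε := by unfold rhoC; rw [hp₀def]; ring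

/-- ρ = R₁/R₂ = 1 − r*√ε + O(ε) as ε → 0⁺. -/
theorem rho_asymptotics (r₁ r₂ : ℝ) (hr₁ : 0 < r₁) (hr₂ : 0 < r₂) :
    ∃ C ε₀ : ℝ, 0 < C ∧ 0 < ε₀ ∧ ∀ ε : ℝ, 0 < ε → ε < ε₀ →
      let β := Real.sqrt ε * Real.sqrt ((2*r₁+ε)*(2*r₂+ε)*(2*r₁+2*r₂+ε)) / (r₁+r₂+ε)
      let c₁ := (r₂^2 - r₁^2 - (r₁+r₂+ε)^2) / (2*(r₁+r₂+ε)) - β/2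
      let c₂ := c₁ + r₁ + r₂ + ε
      let R₁ := Real.sqrt (1 + β/c₁)
      let R₂ := Real.sqrt (1 + β/c₂)
      |R₁/R₂ - (1 - Real.sqrt (2*(r₁+r₂)/(r₁*r₂)) * Real.sqrt ε)| ≤ C * ε := by
  refine ⟨rhoC r₁ r₂, min 1 (r₁*r₂/(432*(r₁+r₂))), ?_, ?_, ?_⟩
  · unfold rhoC; positivity
  · positivity
  · intro ε hε hε' β c₁ c₂ R₁ R₂
    have h1 : ε ≤ 1 := le_of_lt (lt_of_lt_of_le hε' (min_le_left _ _))
    have h2 : ε ≤ r₁*r₂/(432*(r₁+r₂)) := le_of_lt (lt_of_lt_of_le hε' (min_le_right _ _))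
    exact keyRho r₁ r₂ ε (Real.sqrt ε) (Real.sqrt ((2*r₁+ε)*(2*r₂+ε)*(2*r₁+2*r₂+ε))) β c₁ c₂
      hr₁ hr₂ hε h1 h2 (Real.sqrt_nonneg _) (Real.sq_sqrt hε.le)
      (Real.sqrt_nonneg _) (Real.sq_sqrt (by positivity)) rfl rfl (by show c₂ = _; ring)
end
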